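/- Let G = (V,E) be a graph with a dominating vertex q (adjacent to all other vertices), and consider edge-bicolorings B': E → {0,1} such that B'(e) = 1 for every edge e not incident to q. Then there exists such a valid edge-bicoloring (every triangle has 0, 2, or 3 edges colored 1) of weight at most |E \ δ(q)| + k if and only if the graph G − q has a vertex cover of size at most k. -/
import Mathlib


/-- An edge-bicoloring `B` (where `true` means color 1) is valid for `G` if no
triangle of `G` contains exactly one edge colored 1 (every triangle has 0, 2 or 3
edges colored 1). -/
def ValidBicoloring {V : Type*} (G : SimpleGraph V) (B : Sym2 V → Bool) : Prop :=
  ∀ x y z : V, G.Adj x y → G.Adj y z → G.Adj x z →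
    ((if B s(x, y) then 1 else 0) + (if B s(y, z) then 1 else 0) +
      (if B s(x, z) then 1 else 0) : ℕ) ≠ 1

/-- Let `G` have a dominating vertex `q`. There is a valid
edge-bicoloring of `G` coloring every edge not incident to `q` with 1 and of weight
at most `|E ∖ δ(q)| + k` iff the graph `G − q` has a vertex cover of size at most `k`. -/
theorem stmt18 {V : Type*} [Finite V] (G : SimpleGraph V) (q : V)
    (hq : ∀ v : V, v ≠ q → G.Adj q v) (k : ℕ) :
    (∃ B : Sym2 V → Bool,
      (∀ e ∈ G.edgeSet, q ∉ e → B e = true) ∧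
      ValidBicoloring G B ∧
      {e ∈ G.edgeSet | B e = true}.ncard ≤ {e ∈ G.edgeSet | q ∉ e}.ncard + k) ↔
    (∃ S : Set V, q ∉ S ∧ S.ncard ≤ k ∧
      ∀ e ∈ G.edgeSet, q ∉ e → ∃ v ∈ S, v ∈ e) := by
  classical
  constructor
  · rintro ⟨B, hB1, hB2, hB3⟩
    refine ⟨{v | G.Adj q v ∧ B s(q, v) = true}, by simp, ?_, ?_⟩
    · -- size bound
      set T : Set (Sym2 V) := {e | e ∈ G.edgeSet ∧ B e = true ∧ q ∈ e} with hT
      have hdecomp : {e ∈ G.edgeSet | B e = true} =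
          {e ∈ G.edgeSet | q ∉ e} ∪ T := by
        ext e
        simp only [Set.mem_setOf_eq, Set.mem_union, hT]
        constructor
        · rintro ⟨he, hb⟩
          by_cases hqe : q ∈ e
          · exact Or.inr ⟨he, hb, hqe⟩
          · exact Or.inl ⟨he, hqe⟩
        · rintro (⟨he, hqe⟩ | ⟨he, hb, _⟩)
          · exact ⟨he, hB1 e he hqe⟩
          · exact ⟨he, hb⟩
      have hdisj : Disjoint {e ∈ G.edgeSet | q ∉ e} T := by
        rw [Set.disjoint_left]
        rintro e ⟨_, hqe⟩ ⟨_, _, hqe'⟩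
        exact hqe hqe'
      have hcard : {e ∈ G.edgeSet | B e = true}.ncard =
          {e ∈ G.edgeSet | q ∉ e}.ncard + T.ncard := by
        rw [hdecomp, Set.ncard_union_eq hdisj (Set.toFinite _) (Set.toFinite _)]
      have hTk : T.ncard ≤ k := by omega
      have himg : (fun v => s(q, v)) '' {v | G.Adj q v ∧ B s(q, v) = true} ⊆ T := by
        rintro e ⟨v, ⟨hadj, hb⟩, rfl⟩
        exact ⟨hadj, hb, Sym2.mem_mk_left q v⟩
      have hinj : Set.InjOn (fun v => s(q, v)) {v | G.Adj q v ∧ B s(q, v) = true} := by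
        intro a _ b _ h
        exact Sym2.congr_right.mp h
      calc {v | G.Adj q v ∧ B s(q, v) = true}.ncard
          = ((fun v => s(q, v)) '' {v | G.Adj q v ∧ B s(q, v) = true}).ncard :=
            (Set.ncard_image_of_injOn hinj).symm
        _ ≤ T.ncard := Set.ncard_le_ncard himg (Set.toFinite _)
        _ ≤ k := hTk
    · -- cover property
      intro e he hqe
      induction e with
      | _ x y =>
        rw [SimpleGraph.mem_edgeSet] at he
        have hx : x ≠ q := fun h => hqe (h ▸ Sym2.mem_mk_left x y)
        have hy : y ≠ q := fun h => hqe (h ▸ Sym2.mem_mk_right x y)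
        have h1 := hB2 x q y (hq x hx).symm (hq y hy) he
        have hbe : B s(x, y) = true := hB1 _ he hqe
        by_cases hbx : B s(q, x) = true
        · exact ⟨x, ⟨hq x hx, hbx⟩, Sym2.mem_mk_left x y⟩
        · by_cases hby : B s(q, y) = true
          · exact ⟨y, ⟨hq y hy, hby⟩, Sym2.mem_mk_right x y⟩
          · exfalso
            apply h1
            have hswap : s(x, q) = s(q, x) := Sym2.eq_swap
            rw [hswap]
            simp [Bool.not_eq_true] at hbx hby
            simp [hbx, hby, hbe]
  · rintro ⟨S, hqS, hSk, hcov⟩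
    refine ⟨fun e => if q ∉ e ∨ ∃ v ∈ e, v ∈ S then true else false, ?_, ?_, ?_⟩
    · intro e he hqe
      simp [hqe]
    · intro x y z hxy hyz hxz
      set B := fun e : Sym2 V => if q ∉ e ∨ ∃ v ∈ e, v ∈ S then true else false with hB
      have hfalse : ∀ e : Sym2 V, B e = false → q ∈ e ∧ ∀ v ∈ e, v ∉ S := by
        intro e he
        rw [hB] at he
        by_cases h : q ∉ e ∨ ∃ v ∈ e, v ∈ S
        · simp [h] at he
        · push_neg at h; exact h
      intro hsum
      rcases Bool.eq_false_or_eq_true (B s(x, y)) with b1 | b1 <;>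
      rcases Bool.eq_false_or_eq_true (B s(y, z)) with b2 | b2 <;>
      rcases Bool.eq_false_or_eq_true (B s(x, z)) with b3 | b3 <;>
      simp [b1, b2, b3] at hsum
      · -- only s(x,y) colored : q = z
        obtain ⟨hq2, hS2⟩ := hfalse _ b2
        obtain ⟨hq3, hS3⟩ := hfalse _ b3
        rw [Sym2.mem_iff] at hq2 hq3
        have hqz : q = z := by
          rcases hq2 with h | h <;> rcases hq3 with h' | h'
          · exact absurd (h'.symm.trans h) hxy.ne
          · exact h'
          · exact h
          · exact h
        subst hqz
        obtain ⟨v, hvS, hv⟩ := hcov s(x, y) hxy (by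
          rw [Sym2.mem_iff]; push_neg
          exact ⟨hxz.ne.symm, hyz.ne.symm⟩)
        rw [Sym2.mem_iff] at hv
        rcases hv with rfl | rfl
        · exact hS3 v (Sym2.mem_mk_left v q) hvS
        · exact hS2 v (Sym2.mem_mk_left v q) hvS
      · -- only s(y,z) colored : q = x
        obtain ⟨hq1, hS1⟩ := hfalse _ b1
        obtain ⟨hq3, hS3⟩ := hfalse _ b3
        rw [Sym2.mem_iff] at hq1 hq3
        have hqx : q = x := by
          rcases hq1 with h | h <;> rcases hq3 with h' | h'
          · exact h
          · exact h
          · exact h'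
          · exact absurd (h.symm.trans h') hyz.ne
        subst hqx
        obtain ⟨v, hvS, hv⟩ := hcov s(y, z) hyz (by
          rw [Sym2.mem_iff]; push_neg
          exact ⟨hxy.ne, hxz.ne⟩)
        rw [Sym2.mem_iff] at hv
        rcases hv with rfl | rfl
        · exact hS1 v (Sym2.mem_mk_right q v) hvS
        · exact hS3 v (Sym2.mem_mk_right q v) hvS
      · -- only s(x,z) colored : q = y
        obtain ⟨hq1, hS1⟩ := hfalse _ b1
        obtain ⟨hq2, hS2⟩ := hfalse _ b2
        rw [Sym2.mem_iff] at hq1 hq2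
        have hqy : q = y := by
          rcases hq1 with h | h <;> rcases hq2 with h' | h'
          · exact h'
          · exact absurd (h.symm.trans h') hxz.ne
          · exact h
          · exact h
        subst hqy
        obtain ⟨v, hvS, hv⟩ := hcov s(x, z) hxz (by
          rw [Sym2.mem_iff]; push_neg
          exact ⟨hxy.ne.symm, hyz.ne⟩)
        rw [Sym2.mem_iff] at hv
        rcases hv with rfl | rfl
        · exact hS1 v (Sym2.mem_mk_left v q) hvS
        · exact hS2 v (Sym2.mem_mk_right q v) hvS
    · -- weight bound
      have hsub : {e | e ∈ G.edgeSet ∧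
            (if q ∉ e ∨ ∃ v ∈ e, v ∈ S then true else false) = true} ⊆
          {e ∈ G.edgeSet | q ∉ e} ∪ (fun v => s(q, v)) '' S := by
        rintro e ⟨he, hb⟩
        have hP : q ∉ e ∨ ∃ v ∈ e, v ∈ S := by
          by_contra h
          rw [if_neg h] at hb
          exact Bool.false_ne_true hb
        rcases hP with h | ⟨v, hv, hvS⟩
        · exact Or.inl ⟨he, h⟩
        · by_cases hqe : q ∈ e
          · have hne : q ≠ v := fun h => hqS (h ▸ hvS)
            have : e = s(q, v) := ((Sym2.mem_and_mem_iff hne).mp ⟨hqe, hv⟩)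
            exact Or.inr ⟨v, hvS, this.symm⟩
          · exact Or.inl ⟨he, hqe⟩
      calc {e | e ∈ G.edgeSet ∧
            (if q ∉ e ∨ ∃ v ∈ e, v ∈ S then true else false) = true}.ncard
          ≤ ({e ∈ G.edgeSet | q ∉ e} ∪ (fun v => s(q, v)) '' S).ncard :=
            Set.ncard_le_ncard hsub (Set.toFinite _)
        _ ≤ {e ∈ G.edgeSet | q ∉ e}.ncard + ((fun v => s(q, v)) '' S).ncard :=
            Set.ncard_union_le _ _
        _ ≤ {e ∈ G.edgeSet | q ∉ e}.ncard + S.ncard := by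
            gcongr
            exact Set.ncard_image_le (Set.toFinite _)
        _ ≤ {e ∈ G.edgeSet | q ∉ e}.ncard + k := by omega
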